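/- arXiv:1810.07462 — 4 statements merged into one kernel-verified Lean document; each statement's English description precedes it below -/
import Mathlib

section
/- Let M be a matroid of rank n, let S be an independent set in M, and let B be a basis of M. Then there exists an injection φ : S → B such that for every x ∈ S, the set (S \ {x}) ∪ {φ(x)} is independent. -/
open Set

private lemma indep_encard_le_of_subset_closure {α : Type*} {M : Matroid α} {I J : Set α}
    (hI : M.Indep I) (hJ : M.Indep J) (hIJ : I ⊆ M.closure J) : I.encard ≤ J.encard := by
  obtain ⟨I', hI', hII'⟩ := hI.subset_isBasis_of_subset hIJ (M.closure_subset_ground J)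
  calc I.encard ≤ I'.encard := encard_le_encard hII'
    _ = J.encard := hI'.encard_eq_encard hJ.isBasis_closure

theorem stmt_4 {α : Type*} (M : Matroid α) [M.Finite] (S B : Set α)
    (hS : M.Indep S) (hB : M.IsBase B) :
    ∃ φ : α → α, Set.InjOn φ S ∧
      ∀ x ∈ S, φ x ∈ B ∧ M.Indep (insert (φ x) (S \ {x})) := by
  classical
  have hSfin : S.Finite := M.set_finite S hS.subset_ground
  have hBfin : B.Finite := M.set_finite B hB.subset_ground
  have hSB : S.encard ≤ B.encard := by
    obtain ⟨B', hB', hSB'⟩ := hS.exists_isBase_superset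
    rw [← hB'.encard_eq_encard_of_isBase hB]
    exact encard_le_encard hSB'
  haveI : Fintype S := hSfin.fintype
  -- the neighborhood finsets
  set N : S → Finset α := fun x =>
    (hBfin.subset (inter_subset_left (t := {y | M.Indep (insert y (S \ {(x : α)}))}))).toFinset
    with hN
  have hmemN : ∀ (x : S) (y : α), y ∈ N x ↔ y ∈ B ∧ M.Indep (insert y (S \ {(x : α)})) := by
    intro x y
    simp [hN, Set.Finite.mem_toFinset, mem_inter_iff, mem_setOf_eq]
  -- Hall's condition
  have hall : ∀ A : Finset S, A.card ≤ (A.biUnion N).card := by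
    intro A
    rcases A.eq_empty_or_nonempty with rfl | hAne
    · simp
    set T : Set α := (↑) '' (↑A : Set S) with hT
    have hTS : T ⊆ S := by rintro y ⟨⟨y, hy⟩, -, rfl⟩; exact hy
    have hTne : T.Nonempty := hAne.to_set.image _
    have hTfin : T.Finite := (A.finite_toSet.image _)
    -- closure of S \ T is the intersection of closures
    have hclos : M.closure (⋂ x : T, (S \ {(x : α)})) = ⋂ x : T, M.closure (S \ {(x : α)}) := by
      haveI : Nonempty T := hTne.to_subtype
      refine Matroid.closure_iInter_eq_iInter_closure_of_iUnion_indep _ (hS.subset ?_)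
      exact iUnion_subset fun x => diff_subset
    have hiInter : (⋂ x : T, (S \ {(x : α)})) = S \ T := by
      haveI : Nonempty T := hTne.to_subtype
      ext y
      simp only [mem_iInter, mem_diff, mem_singleton_iff]
      constructor
      · rintro h
        obtain ⟨x⟩ := ‹Nonempty T›
        exact ⟨(h x).1, fun hyT => (h ⟨y, hyT⟩).2 rfl⟩
      · rintro ⟨hyS, hyT⟩ x
        exact ⟨hyS, fun h => hyT (h ▸ x.2)⟩
    rw [hiInter] at hclos
    -- B \ closure (S \ T) is contained in the union of neighborhoods
    have hsub : B \ M.closure (S \ T) ⊆ ↑(A.biUnion N) := by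
      intro y hy
      rw [hclos] at hy
      obtain ⟨hyB, hyc⟩ := hy
      rw [mem_iInter] at hyc
      push_neg at hyc
      obtain ⟨⟨x, hxT⟩, hyx⟩ := hyc
      obtain ⟨x', hx'A, hx'x⟩ := hxT
      have hind : M.Indep (insert y (S \ {x})) := by
        rw [(hS.subset diff_subset).insert_indep_iff]
        by_cases hyS : y ∈ S \ {x}
        · exact Or.inr hyS
        · exact Or.inl ⟨hB.subset_ground hyB, hyx⟩
      simp only [Finset.coe_biUnion, mem_iUnion, Finset.mem_coe]
      exact ⟨x', hx'A, (hmemN x' y).mpr ⟨hyB, by rw [hx'x]; exact hind⟩⟩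
    -- counting
    have hTcard : T.ncard = A.card := by
      rw [hT, ncard_image_of_injective _ Subtype.coe_injective, ncard_coe_finset]
    have h1 : (B ∩ M.closure (S \ T)).encard ≤ (S \ T).encard :=
      indep_encard_le_of_subset_closure (hB.indep.subset inter_subset_left)
        (hS.subset diff_subset) inter_subset_right
    -- convert everything to ncard
    have hBsplit : (B ∩ M.closure (S \ T)).ncard + (B \ M.closure (S \ T)).ncard = B.ncard :=
      ncard_inter_add_ncard_diff_eq_ncard B _ hBfin
    have hSsplit : (S \ T).ncard + T.ncard = S.ncard := by
      rw [ncard_diff_add_ncard_of_subset hTS hSfin]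
    have h1' : (B ∩ M.closure (S \ T)).ncard ≤ (S \ T).ncard := by
      have hfin1 : (B ∩ M.closure (S \ T)).Finite := hBfin.subset inter_subset_left
      have hfin2 : (S \ T).Finite := hSfin.subset diff_subset
      rw [← hfin1.cast_ncard_eq, ← hfin2.cast_ncard_eq] at h1
      exact_mod_cast h1
    have hSB' : S.ncard ≤ B.ncard := by
      rw [← hSfin.cast_ncard_eq, ← hBfin.cast_ncard_eq] at hSB
      exact_mod_cast hSB
    have hcard2 : (B \ M.closure (S \ T)).ncard ≤ (A.biUnion N).card := by
      rw [← ncard_coe_finset]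
      exact ncard_le_ncard hsub (A.biUnion N).finite_toSet
    omega
  -- apply Hall's theorem
  obtain ⟨f, hfinj, hf⟩ := (Finset.all_card_le_biUnion_card_iff_existsInjective' N).mp hall
  refine ⟨fun a => if h : a ∈ S then f ⟨a, h⟩ else a, ?_, ?_⟩
  · intro a ha b hb hab
    simp only [dif_pos ha, dif_pos hb] at hab
    exact Subtype.ext_iff.mp (hfinj hab)
  · intro x hx
    have := hf ⟨x, hx⟩
    rw [hmemN] at this
    simpa [dif_pos hx] using this
end

section
/- Let M be a matroid, S an independent set, B a basis, and W ⊆ S. Then there are at least |W| elements y ∈ B such that (S \ W) ∪ {y} is independent and, moreover, (S \ {x}) ∪ {y} is independent for some x ∈ W. -/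
open Set

theorem stmt_5 {α : Type*} (M : Matroid α) [M.Finite] (S B W : Set α)
    (hS : M.Indep S) (hB : M.IsBase B) (hW : W ⊆ S) :
    W.ncard ≤ {y | y ∈ B ∧ M.Indep (insert y (S \ W)) ∧
      ∃ x ∈ W, M.Indep (insert y (S \ {x}))}.ncard := by
  rcases W.eq_empty_or_nonempty with rfl | ⟨w, hw⟩
  · simp
  have hT : M.Indep (S \ W) := hS.subset diff_subset
  have hE : M.E.Finite := M.ground_finite
  have hSE : S ⊆ M.E := hS.subset_ground
  have hBE : B ⊆ M.E := hB.subset_ground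
  have hSfin : S.Finite := hE.subset hSE
  have hBfin : B.Finite := hE.subset hBE
  -- Every y in B \ closure (S \ W) is in the target set
  have hsub : B \ M.closure (S \ W) ⊆ {y | y ∈ B ∧ M.Indep (insert y (S \ W)) ∧
      ∃ x ∈ W, M.Indep (insert y (S \ {x}))} := by
    rintro y ⟨hyB, hycl⟩
    have hyE : y ∈ M.E := hBE hyB
    have hyT : M.Indep (insert y (S \ W)) := by
      rw [hT.insert_indep_iff]
      exact Or.inl ⟨hyE, hycl⟩
    refine ⟨hyB, hyT, ?_⟩
    by_cases hyS : y ∈ S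
    · exact ⟨w, hw, hS.subset (by
        intro z hz
        rcases hz with rfl | hz
        · exact hyS
        · exact hz.1)⟩
    · -- y ∉ S : extend insert y (S \ W) to a basis of insert y S
      have hsub1 : insert y (S \ W) ⊆ insert y S := insert_subset_insert diff_subset
      have hXE : insert y S ⊆ M.E := insert_subset hyE hSE
      obtain ⟨J, hJ, hTJ⟩ := hyT.subset_isBasis_of_subset hsub1 hXE
      -- |S| ≤ |J|
      obtain ⟨J₂, hJ₂, hSJ₂⟩ := hS.subset_isBasis_of_subset (subset_insert y S) hXE
      have hXfin : (insert y S).Finite := hSfin.insert y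
      have hJX : J ⊆ insert y S := hJ.subset
      have hJfin : J.Finite := hXfin.subset hJX
      have hcard : S.ncard ≤ J.ncard := by
        have hen : S.encard ≤ J.encard := by
          rw [← hJ₂.encard_eq_encard hJ]
          exact encard_le_encard hSJ₂
        rw [ncard_def, ncard_def]
        exact ENat.toNat_le_toNat hen hJfin.encard_lt_top.ne
      have hyJ : y ∈ J := hTJ (mem_insert y _)
      -- (insert y S) \ J has at most one element
      have hdcard : ((insert y S) \ J).ncard ≤ 1 := by
        have h1 : ((insert y S) \ J).ncard = (insert y S).ncard - J.ncard :=
          ncard_diff hJX hJfin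
        have h2 : (insert y S).ncard = S.ncard + 1 := ncard_insert_of_notMem hyS hSfin
        omega
      rcases eq_empty_or_nonempty ((insert y S) \ J) with hd | ⟨x, hx⟩
      · -- J = insert y S
        have hXJ : insert y S ⊆ J := diff_eq_empty.mp hd
        exact ⟨w, hw, hJ.indep.subset (fun z hz => hXJ (by
          rcases hz with rfl | hz
          · exact mem_insert _ _
          · exact mem_insert_of_mem _ hz.1))⟩
      · have hxS : x ∈ S := by
          rcases hx.1 with rfl | h
          · exact absurd hyJ hx.2
          · exact h
        have hxW : x ∈ W := by
          by_contra hxW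
          exact hx.2 (hTJ (mem_insert_of_mem _ ⟨hxS, hxW⟩))
        refine ⟨x, hxW, hJ.indep.subset ?_⟩
        intro z hz
        by_contra hzJ
        have hzd : z ∈ (insert y S) \ J := by
          refine ⟨?_, hzJ⟩
          rcases hz with rfl | hz
          · exact mem_insert _ _
          · exact mem_insert_of_mem _ hz.1
        have hxz : x ≠ z := by
          rintro rfl
          rcases hz with rfl | hz
          · exact hx.2 hyJ
          · exact hz.2 rfl
        have : 1 < ((insert y S) \ J).ncard :=
          one_lt_ncard_iff (hXfin.subset diff_subset) |>.2 ⟨x, z, hx, hzd, hxz⟩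
        omega
  -- counting
  have hmono := ncard_le_ncard hsub (hE.subset (fun y hy => hBE hy.1))
  -- |B ∩ closure (S \ W)| ≤ |(S \ W)|
  have hclE : M.closure (S \ W) ⊆ M.E := M.closure_subset_ground (S \ W)
  have hTfin : (S \ W).Finite := hSfin.subset diff_subset
  have hBcl' : (B ∩ M.closure (S \ W)).ncard ≤ (S \ W).ncard := by
    obtain ⟨J, hJ, hIJ⟩ := (hB.indep.subset inter_subset_left).subset_isBasis_of_subset
      inter_subset_right hclE
    have hen : (B ∩ M.closure (S \ W)).encard ≤ (S \ W).encard := by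
      calc (B ∩ M.closure (S \ W)).encard ≤ J.encard := encard_le_encard hIJ
        _ = (S \ W).encard := hJ.encard_eq_encard hT.isBasis_closure
    rw [ncard_def, ncard_def]
    exact ENat.toNat_le_toNat hen hTfin.encard_lt_top.ne
  -- |S| ≤ |B|
  have hSB : S.ncard ≤ B.ncard := by
    obtain ⟨B', hB', hSB'⟩ := hS.exists_isBase_superset
    calc S.ncard ≤ B'.ncard := ncard_le_ncard hSB' (hE.subset hB'.subset_ground)
      _ = B.ncard := by
        rw [ncard_def, ncard_def, hB'.encard_eq_encard_of_isBase hB]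
  have hsplit : (S \ W).ncard + W.ncard = S.ncard := by
    exact ncard_diff_add_ncard_of_subset hW hSfin
  have hBsplit : (B ∩ M.closure (S \ W)).ncard + (B \ M.closure (S \ W)).ncard = B.ncard :=
    ncard_inter_add_ncard_diff_eq_ncard B (M.closure (S \ W)) hBfin
  omega
end

section
/- Let B₁, …, Bₙ be bases of a rank-n matroid. Then there exist two disjoint transversal bases, i.e., two bases T₁, T₂ of M such that Tⱼ contains exactly one distinguished element from each Bᵢ, and for each i the elements chosen from Bᵢ by T₁ and T₂ are distinct, provided n ≥ 2. -/
open Set Function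

namespace Stmt12Aux

variable {α : Type*} {M : Matroid α} {I J : Set α}

lemma card_le_of_subset_closure (hI : M.Indep I) (hJ : M.Indep J)
    (h : I ⊆ M.closure J) : I.encard ≤ J.encard := by
  obtain ⟨I', hI', hII'⟩ := hI.subset_isBasis_of_subset h (M.closure_subset_ground J)
  exact (encard_mono hII').trans (hI'.encard_eq_encard hJ.isBasis_closure).le

lemma closure_eq_of_subset_closure (hI : M.Indep I) (hJ : M.Indep J) (hfin : J.Finite)
    (h : I ⊆ M.closure J) (hc : J.encard ≤ I.encard) : M.closure I = M.closure J := by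
  obtain ⟨I', hI', hII'⟩ := hI.subset_isBasis_of_subset h (M.closure_subset_ground J)
  have hcard : I'.encard = J.encard := hI'.encard_eq_encard hJ.isBasis_closure
  have hIfin : I'.Finite := by
    rw [← Set.encard_lt_top_iff, hcard, Set.encard_lt_top_iff]; exact hfin
  have hEq : I = I' := hIfin.eq_of_subset_of_encard_le' hII' (hcard.le.trans hc)
  rw [hEq, hI'.closure_eq_closure]
  exact M.closure_closure J

lemma base_of_indep_encard (hI : M.Indep I) {B₀ : Set α} (hB₀ : M.IsBase B₀) (hfin : B₀.Finite)
    (h : B₀.encard ≤ I.encard) : M.IsBase I := by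
  obtain ⟨B', hB', hIB'⟩ := hI.exists_isBase_superset
  have h1 : B'.encard = B₀.encard := hB'.encard_eq_encard_of_isBase hB₀
  have hB'fin : B'.Finite := by
    rw [← Set.encard_lt_top_iff, h1, Set.encard_lt_top_iff]; exact hfin
  have : I = B' := hB'fin.eq_of_subset_of_encard_le' hIB' (h1.le.trans h)
  exact this ▸ hB'

lemma injOn_insert' {β γ : Type*} {f : β → γ} {s : Set β} {a : β} (h : Set.InjOn f s)
    (ha : f a ∉ f '' s) : Set.InjOn f (insert a s) := by
  intro x hx y hy hxy
  rcases hx with rfl | hx <;> rcases hy with rfl | hy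
  · rfl
  · exact absurd ⟨_, hy, hxy.symm⟩ ha
  · exact absurd ⟨_, hx, hxy⟩ ha
  · exact h hx hy hxy

lemma inj_aux {n : ℕ} {β : Type*} {f : Fin n → β} {S : Set (Fin n)} {c : Fin n}
    (huniv : ∀ i, i ∈ S ∨ i = c) (hinj : Set.InjOn f S) (hc : f c ∉ f '' S) :
    Function.Injective f := by
  intro a b hab
  rcases huniv a with ha | rfl <;> rcases huniv b with hb | rfl
  · exact hinj ha hb hab
  · exact absurd ⟨a, ha, hab⟩ hc
  · exact absurd ⟨b, hb, hab.symm⟩ hc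
  · rfl

lemma inj_aux2 {n : ℕ} {β : Type*} {f : Fin n → β} {S' : Set (Fin n)} {c0 c : Fin n}
    (huniv : ∀ i, i = c0 ∨ i = c ∨ i ∈ S') (hinj : Set.InjOn f S')
    (h0 : f c0 ∉ f '' S') (h1 : f c ∉ f '' S') (h01 : f c0 ≠ f c) :
    Function.Injective f := by
  intro a b hab
  rcases huniv a with rfl | rfl | ha <;> rcases huniv b with rfl | rfl | hb
  · rfl
  · exact absurd hab h01
  · exact absurd ⟨b, hb, hab.symm⟩ h0
  · exact absurd hab.symm h01
  · rfl
  · exact absurd ⟨b, hb, hab.symm⟩ h1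
  · exact absurd ⟨a, ha, hab⟩ h0
  · exact absurd ⟨a, ha, hab⟩ h1
  · exact hinj ha hb hab

end Stmt12Aux

open Set Function Stmt12Aux

theorem stmt_12 {α : Type*} (M : Matroid α) [M.Finite] (n : ℕ) (hn : 2 ≤ n)
    (B : Fin n → Set α) (hB : ∀ i, M.IsBase (B i)) (hcard : ∀ i, (B i).ncard = n) :
    ∃ T₁ T₂ : Fin n → α,
      (∀ i, T₁ i ∈ B i) ∧ (∀ i, T₂ i ∈ B i) ∧
      M.IsBase (Set.range T₁) ∧ M.IsBase (Set.range T₂) ∧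
      Function.Injective T₁ ∧ Function.Injective T₂ ∧
      (∀ i, T₁ i ≠ T₂ i) := by
  have hindepB : ∀ i, M.Indep (B i) := fun i => (hB i).indep
  have hfinB : ∀ i, (B i).Finite := fun i => (hB i).finite
  have hencB : ∀ i, (B i).encard = n := fun i => by
    rw [← (hfinB i).cast_ncard_eq, hcard i]
  have hBE : ∀ i, B i ⊆ M.E := fun i => (hB i).subset_ground
  -- key picking lemma
  have hpick : ∀ (i : Fin n) (I : Set α), M.Indep I → I.encard < (n : ℕ∞) →
      (B i \ M.closure I).Nonempty := by
    intro i I hI hIc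
    rw [Set.diff_nonempty]
    intro h
    have := card_le_of_subset_closure (hindepB i) hI h
    rw [hencB i] at this
    exact hIc.not_ge this
  -- greedy construction for the first n-1 colours
  have greedy : ∀ k : ℕ, k ≤ n - 1 → ∃ t₁ t₂ : Fin n → α,
      (∀ i : Fin n, i.val < k → t₁ i ∈ B i ∧ t₂ i ∈ B i ∧ t₁ i ≠ t₂ i) ∧
      M.Indep (t₁ '' {i | i.val < k}) ∧ M.Indep (t₂ '' {i | i.val < k}) ∧
      Set.InjOn t₁ {i : Fin n | i.val < k} ∧ Set.InjOn t₂ {i : Fin n | i.val < k} ∧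
      (t₁ '' {i | i.val < k}).encard = k ∧ (t₂ '' {i | i.val < k}).encard = k := by
    intro k
    induction k with
    | zero =>
      intro _
      obtain ⟨a, _⟩ : (B ⟨0, by omega⟩).Nonempty := by
        exact Set.nonempty_of_ncard_ne_zero (by rw [hcard]; omega)
      have hS : {i : Fin n | i.val < 0} = (∅ : Set (Fin n)) := by ext i; simp
      exact ⟨fun _ => a, fun _ => a, by omega, by simp [hS], by simp [hS],
        by simp [hS], by simp [hS], by simp [hS], by simp [hS]⟩
    | succ k ih =>
      intro hk1
      obtain ⟨t₁, t₂, hmem, hI1, hI2, hinj1, hinj2, hc1, hc2⟩ := ih (by omega)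
      set ck : Fin n := ⟨k, by omega⟩ with hck
      set S : Set (Fin n) := {i | i.val < k} with hSdef
      have hckS : ck ∉ S := by simp [hSdef, hck]
      have hS1 : {i : Fin n | i.val < k + 1} = insert ck S := by
        ext i; simp only [hSdef, mem_setOf_eq, mem_insert_iff, hck, Fin.ext_iff]; omega
      have hkn : (k : ℕ∞) < (n : ℕ∞) := by exact_mod_cast (by omega : k < n)
      obtain ⟨y, hyB, hycl⟩ := hpick ck _ hI2 (by rw [hc2]; exact hkn)
      have hx' : ¬ (B ck ⊆ M.closure (t₁ '' S) ∪ {y}) := by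
        intro hsub
        have hdss : B ck \ {y} ⊆ M.closure (t₁ '' S) := by
          intro d hd
          rcases hsub hd.1 with h | h
          · exact h
          · exact absurd h hd.2
        have hle := card_le_of_subset_closure ((hindepB ck).subset diff_subset) hI1 hdss
        rw [hc1] at hle
        have h1 : (B ck \ {y}).encard + 1 = (n : ℕ∞) := by
          rw [Set.encard_diff_singleton_add_one hyB, hencB]
        have h2 : (B ck \ {y}).encard + 1 ≤ (k : ℕ∞) + 1 := add_le_add_left hle 1
        rw [h1] at h2
        have : (n : ℕ∞) ≤ ((k + 1 : ℕ) : ℕ∞) := by push_cast; exact h2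
        have := Nat.cast_le.mp this
        omega
      obtain ⟨x, hxB, hx⟩ := not_subset.1 hx'
      have hxcl : x ∉ M.closure (t₁ '' S) := fun h => hx (Or.inl h)
      have hxy : x ≠ y := fun h => hx (Or.inr h)
      have hI1E : t₁ '' S ⊆ M.E := hI1.subset_ground
      have hI2E : t₂ '' S ⊆ M.E := hI2.subset_ground
      have hxim : x ∉ t₁ '' S := fun h => hxcl (M.subset_closure _ hI1E h)
      have hyim : y ∉ t₂ '' S := fun h => hycl (M.subset_closure _ hI2E h)
      have hneq : ∀ i ∈ S, i ≠ ck := fun i hi h => hckS (h ▸ hi)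
      have him1 : Function.update t₁ ck x '' insert ck S = insert x (t₁ '' S) := by
        rw [Set.image_insert_eq, Function.update_self]
        congr 1
        exact Set.image_congr fun i hi => Function.update_of_ne (hneq i hi) _ _
      have him2 : Function.update t₂ ck y '' insert ck S = insert y (t₂ '' S) := by
        rw [Set.image_insert_eq, Function.update_self]
        congr 1
        exact Set.image_congr fun i hi => Function.update_of_ne (hneq i hi) _ _
      refine ⟨Function.update t₁ ck x, Function.update t₂ ck y, ?_, ?_, ?_, ?_, ?_, ?_, ?_⟩
      · intro i hi
        by_cases h : i = ck
        · subst h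
          simp only [Function.update_self]
          exact ⟨hxB, hyB, hxy⟩
        · rw [Function.update_of_ne h, Function.update_of_ne h]
          refine hmem i ?_
          have : i.val ≠ k := fun hh => h (Fin.ext hh)
          omega
      · rw [hS1, him1, (hI1.insert_indep_iff_of_notMem hxim)]
        exact (Set.mem_diff x).mpr ⟨hBE ck hxB, hxcl⟩
      · rw [hS1, him2, (hI2.insert_indep_iff_of_notMem hyim)]
        exact (Set.mem_diff y).mpr ⟨hBE ck hyB, hycl⟩
      · rw [hS1]
        have hneq : ∀ i ∈ S, i ≠ ck := fun i hi h => hckS (h ▸ hi)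
        have heq : Set.EqOn t₁ (Function.update t₁ ck x) S :=
          fun i hi => (Function.update_of_ne (hneq i hi) _ _).symm
        refine injOn_insert' (hinj1.congr heq) ?_
        rw [Function.update_self, ← Set.image_congr heq]
        exact hxim
      · rw [hS1]
        have hneq : ∀ i ∈ S, i ≠ ck := fun i hi h => hckS (h ▸ hi)
        have heq : Set.EqOn t₂ (Function.update t₂ ck y) S :=
          fun i hi => (Function.update_of_ne (hneq i hi) _ _).symm
        refine injOn_insert' (hinj2.congr heq) ?_
        rw [Function.update_self, ← Set.image_congr heq]
        exact hyim
      · rw [hS1, him1, Set.encard_insert_of_notMem hxim, hc1]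
        push_cast
        rfl
      · rw [hS1, him2, Set.encard_insert_of_notMem hyim, hc2]
        push_cast
        rfl
  -- final stage
  obtain ⟨t₁, t₂, hmem, hI1, hI2, hinj1, hinj2, hc1, hc2⟩ := greedy (n - 1) le_rfl
  set S : Set (Fin n) := {i | i.val < n - 1} with hSdef
  set c : Fin n := ⟨n - 1, by omega⟩ with hcdef
  have hcS : c ∉ S := by simp [hSdef, hcdef]
  have hneqS : ∀ i ∈ S, i ≠ c := fun i hi h => hcS (h ▸ hi)
  have huniv : ∀ i : Fin n, i ∈ S ∨ i = c := by
    intro i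
    by_cases h : i.val < n - 1
    · exact Or.inl h
    · exact Or.inr (Fin.ext (by simp [hcdef]; omega))
  have hunivS : (Set.univ : Set (Fin n)) = insert c S := by
    ext i
    simp only [Set.mem_univ, true_iff, Set.mem_insert_iff]
    rcases huniv i with h | h
    · exact Or.inr h
    · exact Or.inl h
  set I₁ := t₁ '' S with hI1def
  set I₂ := t₂ '' S with hI2def
  have hI1E : I₁ ⊆ M.E := hI1.subset_ground
  have hI2E : I₂ ⊆ M.E := hI2.subset_ground
  have hlt : ((n - 1 : ℕ) : ℕ∞) < (n : ℕ∞) := by exact_mod_cast (by omega : n - 1 < n)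
  have hn1n : ((n - 1 : ℕ) : ℕ∞) + 1 = (n : ℕ∞) := by
    exact_mod_cast congrArg (Nat.cast : ℕ → ℕ∞) (by omega : n - 1 + 1 = n)
  obtain ⟨y, hyB, hycl⟩ := hpick c I₂ hI2 (by rw [hc2]; exact hlt)
  obtain ⟨x0, hx0B, hx0cl⟩ := hpick c I₁ hI1 (by rw [hc1]; exact hlt)
  have himup : ∀ (t : Fin n → α) (v : α), Function.update t c v '' S = t '' S :=
    fun t v => Set.image_congr fun i hi => Function.update_of_ne (hneqS i hi) _ _
  have hrangeup : ∀ (t : Fin n → α) (v : α),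
      Set.range (Function.update t c v) = insert v (t '' S) := by
    intro t v
    rw [← Set.image_univ, hunivS, Set.image_insert_eq, Function.update_self, himup]
  by_cases hA : ∃ x ∈ B c \ M.closure I₁, ∃ y' ∈ B c \ M.closure I₂, x ≠ y'
  · obtain ⟨x, ⟨hxB, hxcl⟩, y1, ⟨hy1B, hy1cl⟩, hxy⟩ := hA
    have hxim : x ∉ I₁ := fun h => hxcl (M.subset_closure _ hI1E h)
    have hyim : y1 ∉ I₂ := fun h => hy1cl (M.subset_closure _ hI2E h)
    refine ⟨Function.update t₁ c x, Function.update t₂ c y1, ?_, ?_, ?_, ?_, ?_, ?_, ?_⟩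
    · intro i
      rcases huniv i with h | rfl
      · rw [Function.update_of_ne (hneqS i h)]; exact (hmem i h).1
      · rw [Function.update_self]; exact hxB
    · intro i
      rcases huniv i with h | rfl
      · rw [Function.update_of_ne (hneqS i h)]; exact (hmem i h).2.1
      · rw [Function.update_self]; exact hy1B
    · rw [hrangeup]
      refine base_of_indep_encard ?_ (hB c) (hfinB c) ?_
      · exact (hI1.insert_indep_iff_of_notMem hxim).mpr ((Set.mem_diff x).mpr ⟨hBE c hxB, hxcl⟩)
      · rw [Set.encard_insert_of_notMem hxim, hc1, hn1n, hencB]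
    · rw [hrangeup]
      refine base_of_indep_encard ?_ (hB c) (hfinB c) ?_
      · exact (hI2.insert_indep_iff_of_notMem hyim).mpr ((Set.mem_diff y1).mpr ⟨hBE c hy1B, hy1cl⟩)
      · rw [Set.encard_insert_of_notMem hyim, hc2, hn1n, hencB]
    · refine inj_aux huniv
        (hinj1.congr fun i hi => (Function.update_of_ne (hneqS i hi) _ _).symm) ?_
      rw [himup, Function.update_self]
      exact hxim
    · refine inj_aux huniv
        (hinj2.congr fun i hi => (Function.update_of_ne (hneqS i hi) _ _).symm) ?_
      rw [himup, Function.update_self]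
      exact hyim
    · intro i
      rcases huniv i with h | rfl
      · rw [Function.update_of_ne (hneqS i h), Function.update_of_ne (hneqS i h)]
        exact (hmem i h).2.2
      · rw [Function.update_self, Function.update_self]; exact hxy
  · -- repair case
    push_neg at hA
    have hx0y : x0 = y := hA x0 ⟨hx0B, hx0cl⟩ y ⟨hyB, hycl⟩
    have hzcl1 : y ∉ M.closure I₁ := by rw [← hx0y]; exact hx0cl
    have hA1 : ∀ x ∈ B c \ M.closure I₁, x = y := fun x hx => hA x hx y ⟨hyB, hycl⟩
    have hA2 : ∀ y' ∈ B c \ M.closure I₂, y' = y := fun y' hy' =>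
      (hA x0 ⟨hx0B, hx0cl⟩ y' hy').symm.trans hx0y
    set D : Set α := B c \ {y} with hDdef
    have hDcl1 : D ⊆ M.closure I₁ := by
      intro d hd
      by_contra hdc
      exact hd.2 (hA1 d ⟨hd.1, hdc⟩)
    have hDcl2 : D ⊆ M.closure I₂ := by
      intro d hd
      by_contra hdc
      exact hd.2 (hA2 d ⟨hd.1, hdc⟩)
    have hDindep : M.Indep D := (hindepB c).subset diff_subset
    have hDenc : D.encard + 1 = (n : ℕ∞) := by
      rw [hDdef, Set.encard_diff_singleton_add_one hyB, hencB]
    have hI1enc' : I₁.encard + 1 = (n : ℕ∞) := by rw [hc1, hn1n]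
    have hI2enc' : I₂.encard + 1 = (n : ℕ∞) := by rw [hc2, hn1n]
    have hfinI1 : I₁.Finite := M.ground_finite.subset hI1E
    have hfinI2 : I₂.Finite := M.ground_finite.subset hI2E
    have hDI1 : D.encard = I₁.encard :=
      WithTop.add_right_cancel WithTop.one_ne_top (hDenc.trans hI1enc'.symm)
    have hDI2 : D.encard = I₂.encard :=
      WithTop.add_right_cancel WithTop.one_ne_top (hDenc.trans hI2enc'.symm)
    have hclD1 : M.closure D = M.closure I₁ :=
      closure_eq_of_subset_closure hDindep hI1 hfinI1 hDcl1 hDI1.symm.le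
    have hclD2 : M.closure D = M.closure I₂ :=
      closure_eq_of_subset_closure hDindep hI2 hfinI2 hDcl2 hDI2.symm.le
    have hcl12 : M.closure I₁ = M.closure I₂ := hclD1.symm.trans hclD2
    have hyI1 : y ∉ I₁ := fun h => hzcl1 (M.subset_closure _ hI1E h)
    -- T₁ := update t₁ c y
    set c0 : Fin n := ⟨0, by omega⟩ with hc0def
    have hc0S : c0 ∈ S := by simp [hSdef, hc0def]; omega
    have hc0c : c0 ≠ c := hneqS c0 hc0S
    obtain ⟨w, hwB, hwcl⟩ := hpick c0 I₁ hI1 (by rw [hc1]; exact hlt)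
    have hwcl2 : w ∉ M.closure I₂ := by rw [← hcl12]; exact hwcl
    set K : Set α := t₂ '' (S \ {c0}) with hKdef
    have hKsub : K ⊆ I₂ := Set.image_mono diff_subset
    have hKindep : M.Indep K := hI2.subset hKsub
    have ht2c0 : t₂ c0 ∈ I₂ := ⟨c0, hc0S, rfl⟩
    have hKeq : K = I₂ \ {t₂ c0} := by
      apply Set.Subset.antisymm
      · rintro _ ⟨i, ⟨hiS, hic0⟩, rfl⟩
        refine ⟨⟨i, hiS, rfl⟩, fun hh => ?_⟩
        exact hic0 (by simpa using hinj2 hiS hc0S (by simpa using hh))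
      · rintro a ⟨⟨i, hiS, rfl⟩, ha⟩
        exact ⟨i, ⟨hiS, fun hh => ha (by simp only [Set.mem_singleton_iff] at hh ⊢; rw [hh])⟩, rfl⟩
    have hKenc : K.encard + 1 = I₂.encard := by
      rw [hKeq]; exact Set.encard_diff_singleton_add_one ht2c0
    have hwK : w ∉ M.closure K := by
      intro h
      exact hwcl2 (M.closure_subset_closure hKsub h)
    have hwKm : w ∉ K := fun h => hwK (M.subset_closure _ hKindep.subset_ground h)
    have hJindep : M.Indep (insert w K) :=
      (hKindep.insert_indep_iff_of_notMem hwKm).mpr ((Set.mem_diff w).mpr ⟨hBE c0 hwB, hwK⟩)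
    have hJenc : (insert w K).encard = I₂.encard := by
      rw [Set.encard_insert_of_notMem hwKm]; exact hKenc
    have hwI2 : w ∉ I₂ := fun h => hwcl2 (M.subset_closure _ hI2E h)
    have hy' : (D \ M.closure (insert w K)).Nonempty := by
      rw [Set.diff_nonempty]
      intro hcon
      have h1 : M.closure D ⊆ M.closure (insert w K) :=
        Matroid.closure_subset_closure_of_subset_closure hcon
      have hsub2 : insert w I₂ ⊆ M.closure (insert w K) := by
        refine Set.insert_subset
          (M.subset_closure _ hJindep.subset_ground (Set.mem_insert w K)) ?_
        intro a haI₂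
        have h2 : a ∈ M.closure I₂ := M.subset_closure _ hI2E haI₂
        rw [← hclD2] at h2
        exact h1 h2
      have hiw : M.Indep (insert w I₂) :=
        (hI2.insert_indep_iff_of_notMem hwI2).mpr ((Set.mem_diff w).mpr ⟨hBE c0 hwB, hwcl2⟩)
      have hle := card_le_of_subset_closure hiw hJindep hsub2
      rw [hJenc, Set.encard_insert_of_notMem hwI2, hc2, hn1n] at hle
      have := Nat.cast_le.mp hle
      omega
    obtain ⟨y', hy'mem⟩ := hy'
    obtain ⟨hy'D, hy'cl⟩ := hy'mem
    have hy'J : y' ∉ insert w K := fun h =>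
      hy'cl (M.subset_closure _ hJindep.subset_ground h)
    have hy'Bc : y' ∈ B c := hy'D.1
    have hy'ney : y' ≠ y := fun h => hy'D.2 (by rw [h]; rfl)
    have hT2indep : M.Indep (insert y' (insert w K)) :=
      (hJindep.insert_indep_iff_of_notMem hy'J).mpr
        ((Set.mem_diff y').mpr ⟨hBE c hy'Bc, hy'cl⟩)
    set T₂ : Fin n → α := fun i => if i = c0 then w else if i = c then y' else t₂ i with hT2def
    have hT2c0 : T₂ c0 = w := by simp [hT2def]
    have hT2c : T₂ c = y' := by simp [hT2def, hc0c.symm]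
    have hT2eq : ∀ i ∈ S \ {c0}, T₂ i = t₂ i := by
      intro i hi
      have h1 : i ≠ c0 := fun h => hi.2 (by rw [h]; rfl)
      have h2 : i ≠ c := hneqS i hi.1
      simp [hT2def, h1, h2]
    have hu2 : ∀ i : Fin n, i = c0 ∨ i = c ∨ i ∈ S \ {c0} := by
      intro i
      by_cases h0 : i = c0
      · exact Or.inl h0
      rcases huniv i with h | h
      · exact Or.inr (Or.inr ⟨h, fun hh => h0 (by simpa using hh)⟩)
      · exact Or.inr (Or.inl h)
    have hT2im : T₂ '' (S \ {c0}) = K := by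
      rw [hKdef]
      exact Set.image_congr hT2eq
    have hrange2 : Set.range T₂ = insert y' (insert w K) := by
      have huu : (Set.univ : Set (Fin n)) = insert c0 (insert c (S \ {c0})) := by
        ext i
        simp only [Set.mem_univ, true_iff, Set.mem_insert_iff]
        exact hu2 i
      rw [← Set.image_univ, huu, Set.image_insert_eq, Set.image_insert_eq, hT2c0, hT2c, hT2im,
        Set.insert_comm]
    -- conclude
    refine ⟨Function.update t₁ c y, T₂, ?_, ?_, ?_, ?_, ?_, ?_, ?_⟩
    · intro i
      rcases huniv i with h | rfl
      · rw [Function.update_of_ne (hneqS i h)]; exact (hmem i h).1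
      · rw [Function.update_self]; exact hyB
    · intro i
      rcases hu2 i with rfl | rfl | h
      · rw [hT2c0]; exact hwB
      · rw [hT2c]; exact hy'Bc
      · rw [hT2eq i h]; exact (hmem i h.1).2.1
    · rw [hrangeup]
      refine base_of_indep_encard ?_ (hB c) (hfinB c) ?_
      · exact (hI1.insert_indep_iff_of_notMem hyI1).mpr
          ((Set.mem_diff y).mpr ⟨hBE c hyB, hzcl1⟩)
      · rw [Set.encard_insert_of_notMem hyI1, hc1, hn1n, hencB]
    · rw [hrange2]
      refine base_of_indep_encard hT2indep (hB c) (hfinB c) ?_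
      rw [Set.encard_insert_of_notMem hy'J, hJenc, hI2enc', hencB]
    · refine inj_aux huniv
        (hinj1.congr fun i hi => (Function.update_of_ne (hneqS i hi) _ _).symm) ?_
      rw [himup, Function.update_self]
      exact hyI1
    · refine inj_aux2 hu2 ((hinj2.mono Set.diff_subset).congr fun i hi => (hT2eq i hi).symm)
        ?_ ?_ ?_
      · rw [hT2im, hT2c0]; exact hwKm
      · rw [hT2im, hT2c]
        exact fun h => hy'J (Set.mem_insert_of_mem w h)
      · rw [hT2c0, hT2c]
        exact fun h => hwcl (h ▸ hDcl1 hy'D)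
    · intro i
      rcases hu2 i with rfl | rfl | h
      · rw [hT2c0, Function.update_of_ne hc0c]
        have : t₁ c0 ∈ M.closure I₁ := M.subset_closure _ hI1E ⟨c0, hc0S, rfl⟩
        exact fun hh => hwcl (hh ▸ this)
      · rw [hT2c, Function.update_self]
        exact fun hh => hy'ney hh.symm
      · rw [hT2eq i h, Function.update_of_ne (hneqS i h.1)]
        exact (hmem i h.1).2.2
end

section
/- Let S be a nonempty rainbow independent set in a rank-n matroid with colour classes B₁,…,Bₙ, let b be a colour not appearing in S, and let F_b ⊆ B_b. Then either there exists y ∈ B_b \ F_b with S + (y,b) an RIS or with S − (x',c) + (y,b) + (x,c) an RIS for some (x',c) ∈ S and some x (i.e., an (S,b)-addable element outside F), or there are at least n − |F_b| colours c appearing in S that are (S,b)-swappable: for such c there exist (x',c) ∈ S and y ∈ B_b \ F_b with S + (y,b) − (x',c) an RIS. -/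
/-- A rainbow independent set: a set of (element, colour) pairs drawn from the colour
classes `B`, with pairwise distinct matroid elements forming an independent set, and
pairwise distinct colours. -/
def IsRIS {α : Type*} {n : ℕ} (M : Matroid α) (B : Fin n → Set α)
    (S : Set (α × Fin n)) : Prop :=
  (∀ p ∈ S, p.1 ∈ B p.2) ∧ S.InjOn Prod.fst ∧ S.InjOn Prod.snd ∧
    M.Indep (Prod.fst '' S)

/-- Inserting a new colour with a new matroid element preserves being an RIS,
provided independence holds. -/
lemma ris_insert {α : Type*} {n : ℕ} {M : Matroid α} {B : Fin n → Set α}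
    {S : Set (α × Fin n)} (hS : IsRIS M B S) {b : Fin n} (hb : ∀ z, (z, b) ∉ S)
    {y : α} (hy : y ∈ B b) (hyI : y ∉ Prod.fst '' S)
    (hind : M.Indep (insert y (Prod.fst '' S))) :
    IsRIS M B (insert (y, b) S) := by
  obtain ⟨hmem, hfst, hsnd, -⟩ := hS
  refine ⟨?_, ?_, ?_, ?_⟩
  · rintro p (rfl | hp)
    · exact hy
    · exact hmem p hp
  · rintro p (rfl | hp) q (rfl | hq) hpq
    · rfl
    · exact absurd ⟨q, hq, hpq.symm⟩ hyI
    · exact absurd ⟨p, hp, hpq⟩ hyI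
    · exact hfst hp hq hpq
  · have hne : ∀ p ∈ S, p.2 ≠ b := by
      rintro ⟨p1, p2⟩ hp rfl; exact hb p1 hp
    rintro p (rfl | hp) q (rfl | hq) hpq
    · rfl
    · exact absurd hpq.symm (hne q hq)
    · exact absurd hpq (hne p hp)
    · exact hsnd hp hq hpq
  · rwa [Set.image_insert_eq]

/-- Swapping an element of an RIS for a new element of a new colour preserves
being an RIS, provided independence holds. -/
lemma ris_swap {α : Type*} {n : ℕ} {M : Matroid α} {B : Fin n → Set α}
    {S : Set (α × Fin n)} (hS : IsRIS M B S) {b : Fin n} (hb : ∀ z, (z, b) ∉ S)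
    {x : α} {c : Fin n} (hxc : (x, c) ∈ S) {y : α} (hy : y ∈ B b)
    (hyx : y = x ∨ y ∉ Prod.fst '' S)
    (hind : M.Indep (insert y (Prod.fst '' S \ {x}))) :
    IsRIS M B (insert (y, b) (S \ {(x, c)})) := by
  obtain ⟨hmem, hfst, hsnd, -⟩ := hS
  have himg : Prod.fst '' (S \ {(x, c)}) = Prod.fst '' S \ {x} := by
    ext z
    constructor
    · rintro ⟨p, ⟨hpS, hp⟩, rfl⟩
      refine ⟨⟨p, hpS, rfl⟩, fun hzx => ?_⟩
      exact hp (hfst hpS hxc (Set.mem_singleton_iff.mp hzx))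
    · rintro ⟨⟨p, hpS, rfl⟩, hz⟩
      exact ⟨p, ⟨hpS, fun h => hz (by rw [Set.mem_singleton_iff.mp h]; exact rfl)⟩, rfl⟩
  have hkey : ∀ p ∈ S \ {(x, c)}, p.1 ≠ y := by
    rintro p ⟨hpS, hp⟩ hpy
    rcases hyx with rfl | hni
    · exact hp (hfst hpS hxc hpy)
    · exact hni ⟨p, hpS, hpy⟩
  refine ⟨?_, ?_, ?_, ?_⟩
  · rintro p (rfl | hp)
    · exact hy
    · exact hmem p hp.1
  · rintro p (rfl | hp) q (rfl | hq) hpq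
    · rfl
    · exact absurd hpq.symm (hkey q hq)
    · exact absurd hpq (hkey p hp)
    · exact hfst hp.1 hq.1 hpq
  · have hne : ∀ p ∈ S, p.2 ≠ b := by
      rintro ⟨p1, p2⟩ hp rfl; exact hb p1 hp
    rintro p (rfl | hp) q (rfl | hq) hpq
    · rfl
    · exact absurd hpq.symm (hne q hq.1)
    · exact absurd hpq (hne p hp.1)
    · exact hsnd hp.1 hq.1 hpq
  · rwa [Set.image_insert_eq, himg]

theorem stmt_14 {α : Type*} (M : Matroid α) [M.Finite] (n : ℕ)
    (B : Fin n → Set α) (hB : ∀ i, M.IsBase (B i)) (hcard : ∀ i, (B i).ncard = n)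
    (F : Set (α × Fin n)) (S : Set (α × Fin n)) (hS : IsRIS M B S)
    (hSne : S.Nonempty) (b : Fin n) (hb : ∀ x, (x, b) ∉ S) :
    (∃ y ∈ B b \ {x | x ∈ B b ∧ (x, b) ∈ F},
      IsRIS M B (insert (y, b) S) ∨
      ∃ x' c x, (x', c) ∈ S ∧ x ∈ B c ∧
        IsRIS M B (insert (x, c) (insert (y, b) (S \ {(x', c)})))) ∨
    n - {x | x ∈ B b ∧ (x, b) ∈ F}.ncard ≤
      {c : Fin n | ∃ x', (x', c) ∈ S ∧ ∃ y, y ∈ B b ∧ (y, b) ∉ F ∧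
        IsRIS M B (insert (y, b) (S \ {(x', c)}))}.ncard := by
  classical
  by_cases h1 : ∃ y ∈ B b \ {x | x ∈ B b ∧ (x, b) ∈ F},
      IsRIS M B (insert (y, b) S) ∨
      ∃ x' c x, (x', c) ∈ S ∧ x ∈ B c ∧
        IsRIS M B (insert (x, c) (insert (y, b) (S \ {(x', c)})))
  · exact Or.inl h1
  right
  push_neg at h1
  set Fb : Set α := {x | x ∈ B b ∧ (x, b) ∈ F} with hFbdef
  set C : Set (Fin n) := {c : Fin n | ∃ x', (x', c) ∈ S ∧ ∃ y, y ∈ B b ∧ (y, b) ∉ F ∧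
        IsRIS M B (insert (y, b) (S \ {(x', c)}))} with hCdef
  set I : Set α := Prod.fst '' S with hIdef
  have hIindep : M.Indep I := hS.2.2.2
  have hIE : I ⊆ M.E := hIindep.subset_ground
  have hfst := hS.2.1
  have hsnd := hS.2.2.1
  have hEfin : M.E.Finite := M.ground_finite
  have hIfin : I.Finite := hEfin.subset hIE
  set W : Set α := Prod.fst '' {p ∈ S | p.2 ∈ C} with hWdef
  have hWI : W ⊆ I := Set.image_mono (Set.sep_subset _ _)
  have hWindep : M.Indep W := hIindep.subset hWI
  have hWE : W ⊆ M.E := hWindep.subset_ground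
  -- Step A : every element of `B b \ Fb` lies in the closure of `W`.
  have hA : ∀ y ∈ B b \ Fb, y ∈ M.closure W := by
    rintro y ⟨hyB, hyF⟩
    have hyE : y ∈ M.E := (hB b).subset_ground hyB
    have hyFb : (y, b) ∉ F := fun h => hyF ⟨hyB, h⟩
    by_cases hyI : y ∈ I
    · obtain ⟨⟨x, c⟩, hpS, rfl⟩ := hyI
      have hxI : (x, c).1 ∈ I := ⟨(x, c), hpS, rfl⟩
      have hcC : c ∈ C := by
        refine ⟨x, hpS, x, hyB, hyFb, ris_swap hS hb hpS hyB (Or.inl rfl) ?_⟩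
        rw [Set.insert_diff_singleton, Set.insert_eq_of_mem hxI]
        exact hIindep
      exact M.subset_closure W hWE ⟨(x, c), ⟨hpS, hcC⟩, rfl⟩
    · have hnotins : ¬ M.Indep (insert y I) := fun hind =>
        (h1 y ⟨hyB, hyF⟩).1 (ris_insert hS hb hyB hyI hind)
      have hyclI : y ∈ M.closure I := by
        by_contra hcl
        exact hnotins ((hIindep.insert_indep_iff_of_notMem hyI).mpr ⟨hyE, hcl⟩)
      by_contra hyW
      have hyWmem : y ∉ W := fun h => hyI (hWI h)
      have hins : M.Indep (insert y W) :=
        (hWindep.insert_indep_iff_of_notMem hyWmem).mpr ⟨hyE, hyW⟩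
      have hyIE : insert y I ⊆ M.E := Set.insert_subset hyE hIE
      obtain ⟨J, hJ, hsubJ⟩ := hins.subset_isBasis_of_subset (Set.insert_subset_insert hWI) hyIE
      have hIbasis : M.IsBasis I (insert y I) :=
        hIindep.isBasis_of_subset_of_subset_closure (Set.subset_insert y I)
          (Set.insert_subset hyclI (M.subset_closure I hIE))
      have hyJ : y ∈ J := hsubJ (Set.mem_insert y W)
      have hJI : J \ {y} ⊆ I := by
        rintro z ⟨hzJ, hzy⟩
        rcases hJ.subset hzJ with h | h
        · exact absurd h hzy
        · exact h
      have hKcard : (J \ {y}).encard + 1 = J.encard := Set.encard_diff_singleton_add_one hyJ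
      have hJIcard : J.encard = I.encard := hJ.encard_eq_encard hIbasis
      have hsplit : (I \ (J \ {y})).encard + (J \ {y}).encard = I.encard :=
        Set.encard_diff_add_encard_of_subset hJI
      have hone : (I \ (J \ {y})).encard = 1 := by
        have hfinK : (J \ {y}).encard ≠ ⊤ := (hIfin.subset hJI).encard_lt_top.ne
        have h2 : (J \ {y}).encard + (I \ (J \ {y})).encard = (J \ {y}).encard + 1 := by
          rw [add_comm, hsplit, ← hJIcard, ← hKcard]
        exact WithTop.add_left_cancel hfinK h2
      obtain ⟨x, hxeq⟩ := Set.encard_eq_one.mp hone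
      have hxmem : x ∈ I \ (J \ {y}) := hxeq ▸ rfl
      have hxI : x ∈ I := hxmem.1
      have hxJ : x ∉ J := fun hxJ => hxmem.2 ⟨hxJ, fun h => hyI (Set.mem_singleton_iff.mp h ▸ hxI)⟩
      have hIdiff : I \ {x} ⊆ J := by
        rintro z ⟨hzI, hzx⟩
        by_cases hzK : z ∈ J \ {y}
        · exact hzK.1
        · exact absurd (hxeq ▸ (⟨hzI, hzK⟩ : z ∈ I \ (J \ {y}))) hzx
      have hindswap : M.Indep (insert y (I \ {x})) :=
        hJ.indep.subset (Set.insert_subset hyJ hIdiff)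
      obtain ⟨⟨x0, c⟩, hxcS, hx0⟩ := hxI
      subst hx0
      have hcC : c ∈ C := ⟨_, hxcS, y, hyB, hyFb, ris_swap hS hb hxcS hyB (Or.inr hyI) hindswap⟩
      exact hxJ (hsubJ (Set.mem_insert_of_mem y ⟨(x0, c), ⟨hxcS, hcC⟩, rfl⟩))
  -- Step B : counting.
  have hDindep : M.Indep (B b \ Fb) := (hB b).indep.subset Set.diff_subset
  obtain ⟨J, hJ, hDJ⟩ := hDindep.subset_isBasis_of_subset (fun y hy => hA y hy)
    (M.closure_subset_ground W)
  have hWfin : W.Finite := hIfin.subset hWI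
  have hencard : (B b \ Fb).encard ≤ W.encard := by
    calc (B b \ Fb).encard ≤ J.encard := Set.encard_le_encard hDJ
      _ = W.encard := hJ.encard_eq_encard hWindep.isBasis_closure
  have hDW : (B b \ Fb).ncard ≤ W.ncard := by
    rw [Set.ncard_def, Set.ncard_def]
    exact ENat.toNat_le_toNat hencard hWfin.encard_lt_top.ne
  have hWC : W.ncard ≤ C.ncard := by
    set f : α → Fin n := fun x => if h : ∃ c, (x, c) ∈ S then h.choose else b with hfdef
    have hfmem : ∀ x ∈ W, f x ∈ C := by
      rintro x ⟨⟨x', c⟩, ⟨hpS, hpC⟩, rfl⟩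
      have hex : ∃ c, ((x', c).1, c) ∈ S := ⟨c, hpS⟩
      have hch : ((x', c).1, hex.choose) ∈ S := hex.choose_spec
      have : ((x', c).1, hex.choose) = (x', c) := hfst hch hpS rfl
      have hc : hex.choose = c := congrArg Prod.snd this
      simp only [hfdef, dif_pos hex, hc]
      exact hpC
    have hfinj : Set.InjOn f W := by
      rintro x1 hx1 x2 hx2 hfx
      obtain ⟨⟨x1', c1⟩, ⟨hp1S, -⟩, rfl⟩ := hx1
      obtain ⟨⟨x2', c2⟩, ⟨hp2S, -⟩, rfl⟩ := hx2
      have hex1 : ∃ c, ((x1', c1).1, c) ∈ S := ⟨c1, hp1S⟩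
      have hex2 : ∃ c, ((x2', c2).1, c) ∈ S := ⟨c2, hp2S⟩
      have h1' : ((x1', c1).1, hex1.choose) ∈ S := hex1.choose_spec
      have h2' : ((x2', c2).1, hex2.choose) ∈ S := hex2.choose_spec
      simp only [hfdef, dif_pos hex1, dif_pos hex2] at hfx
      have := hsnd h1' h2' (by simpa using hfx)
      simpa using congrArg Prod.fst this
    exact Set.ncard_le_ncard_of_injOn f hfmem hfinj (Set.toFinite C)
  have hFbB : Fb ⊆ B b := fun x hx => hx.1
  have hBfin : (B b).Finite := hEfin.subset (hB b).subset_ground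
  have hDcard : (B b \ Fb).ncard = n - Fb.ncard := by
    rw [Set.ncard_diff hFbB (hBfin.subset hFbB), hcard b]
  calc n - Fb.ncard = (B b \ Fb).ncard := hDcard.symm
    _ ≤ W.ncard := hDW
    _ ≤ C.ncard := hWC
end
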